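/- For γ ∈ [1,3], φ(γ) ≥ γ·(7/15)·(10/7)^{(5-γ)/2}, where φ(γ) = 2^{(1-γ)/2}·(γ/2)·∫_0^∞ (s+1)^{-(γ+2)/2}(s+2)^{(γ-1)/2} ds. -/

import Mathlib

open Real MeasureTheory Set Filter Topology

lemma shift_rpow_deriv {a : ℝ} (ha : a < -1) :
    ∀ x ∈ Set.Ici (0:ℝ), HasDerivAt (fun t : ℝ => (t+1)^(a+1)/(a+1)) ((x+1)^a) x := by
  intro x hx
  have hx1 : (0:ℝ) < x + 1 := by have : (0:ℝ) ≤ x := hx; linarith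
  have h1 : HasDerivAt (fun t : ℝ => t + 1) 1 x := (hasDerivAt_id x).add_const 1
  have h2 : HasDerivAt (fun u : ℝ => u^(a+1)) ((a+1)*(x+1)^(a+1-1)) (x+1) :=
    Real.hasDerivAt_rpow_const (Or.inl hx1.ne')
  have h3 := (h2.comp x h1).div_const (a+1)
  have ha1 : a + 1 ≠ 0 := by linarith
  exact h3.congr_deriv (by rw [add_sub_cancel_right]; field_simp)

lemma shift_rpow_tendsto {a : ℝ} (ha : a < -1) :
    Tendsto (fun t : ℝ => (t+1)^(a+1)/(a+1)) atTop (𝓝 (0/(a+1))) := by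
  apply Tendsto.div_const
  have h := tendsto_rpow_neg_atTop (show 0 < -(a+1) by linarith)
  have h2 : Tendsto (fun t:ℝ => t+1) atTop atTop := tendsto_atTop_add_const_right _ 1 tendsto_id
  simpa only [neg_neg, Function.comp_def] using h.comp h2

lemma integrableOn_shift_rpow {a : ℝ} (ha : a < -1) :
    IntegrableOn (fun s : ℝ => (s+1)^a) (Set.Ioi (0:ℝ)) :=
  integrableOn_Ioi_deriv_of_nonneg' (shift_rpow_deriv ha)
    (fun x hx => Real.rpow_nonneg (by have : (0:ℝ) < x := hx; linarith) a)
    (shift_rpow_tendsto ha)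

lemma integral_shift_rpow {a : ℝ} (ha : a < -1) :
    ∫ s in Set.Ioi (0:ℝ), (s+1)^a = -1/(a+1) := by
  rw [integral_Ioi_of_hasDerivAt_of_tendsto' (shift_rpow_deriv ha) (integrableOn_shift_rpow ha)
    (shift_rpow_tendsto ha)]
  norm_num [Real.one_rpow]
  rw [neg_div, one_div]

lemma phi_decomp {γ α s : ℝ} (hα : α = (3-γ)/2) (hs : 0 < s) :
    (s+1)^(-(γ+2)/2) * (s+2)^((γ-1)/2)
      = ((s+1)^(-(3:ℝ)/2) + (s+1)^(-(5:ℝ)/2)) * ((s+2)/(s+1))^(-α) := by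
  have h1 : (0:ℝ) < s + 1 := by linarith
  have h2 : (0:ℝ) < s + 2 := by linarith
  have eA : (s+1)^(-(γ+2)/2) = (s+1)^(-(5:ℝ)/2) * (s+1)^α := by
    rw [← Real.rpow_add h1]; congr 1; rw [hα]; ring
  have eB : (s+2)^((γ-1)/2) = (s+2) * (s+2)^(-α) := by
    rw [show (γ-1)/2 = 1 + (-α) by rw [hα]; ring, Real.rpow_add h2, Real.rpow_one]
  have eC : ((s+2)/(s+1))^(-α) = (s+1)^α * (s+2)^(-α) := by
    rw [Real.rpow_neg (by positivity), Real.div_rpow h2.le h1.le, Real.rpow_neg h2.le,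
      inv_div, div_eq_mul_inv]
  have k3 : (s+1)^(-(3:ℝ)/2) + (s+1)^(-(5:ℝ)/2) = (s+1)^(-(5:ℝ)/2) * (s+2) := by
    have e35 : (s+1)^(-(3:ℝ)/2) = (s+1)^(-(5:ℝ)/2) * (s+1) := by
      rw [← Real.rpow_add_one h1.ne']; norm_num
    rw [e35]; ring
  rw [eA, eB, eC, k3]; ring

lemma phi_pointwise {γ α s : ℝ} (h1γ : 1 ≤ γ) (h3γ : γ ≤ 3) (hα : α = (3-γ)/2) (hs : 0 < s) :
    (7/5:ℝ)^(-α) * ((1+(2/7)*α)*(s+1)^(-(3:ℝ)/2) + (1-(3/7)*α)*(s+1)^(-(5:ℝ)/2)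
        + (-(5/7)*α)*(s+1)^(-(7:ℝ)/2))
      ≤ (s+1)^(-(γ+2)/2) * (s+2)^((γ-1)/2) := by
  have h1 : (0:ℝ) < s + 1 := by linarith
  have h2 : (0:ℝ) < s + 2 := by linarith
  have hα0 : 0 ≤ α := by rw [hα]; linarith
  have hα1 : α ≤ 1 := by rw [hα]; linarith
  set x : ℝ := (s+2)/(s+1) with hxdef
  have hx1 : 1 ≤ x := by rw [hxdef, le_div_iff₀ h1]; linarith
  have e35 : (s+1)^(-(3:ℝ)/2) = (s+1)^(-(5:ℝ)/2) * (s+1) := by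
    rw [← Real.rpow_add_one h1.ne']; norm_num
  have e57 : (s+1)^(-(5:ℝ)/2) = (s+1)^(-(7:ℝ)/2) * (s+1) := by
    rw [← Real.rpow_add_one h1.ne']; norm_num
  have k3 : (s+1)^(-(3:ℝ)/2) + (s+1)^(-(5:ℝ)/2) = (s+1)^(-(5:ℝ)/2) * (s+2) := by
    rw [e35]; ring
  have k5 : ((s+1)^(-(3:ℝ)/2) + (s+1)^(-(5:ℝ)/2)) * x
      = (s+1)^(-(3:ℝ)/2) + 2*(s+1)^(-(5:ℝ)/2) + (s+1)^(-(7:ℝ)/2) := by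
    rw [hxdef, e35, e57]
    field_simp
    ring
  -- Bernoulli tangent bound
  have hxpos : (0:ℝ) < (5/7)*x := by linarith
  have hb : ((5/7)*x)^α ≤ 1 + α*((5/7)*x - 1) := by
    have h := rpow_one_add_le_one_add_mul_self (s := (5/7)*x - 1) (by linarith) hα0 hα1
    rwa [show (1:ℝ) + ((5/7)*x - 1) = (5/7)*x by ring] at h
  have hu : 0 < 1 + α*((5/7)*x - 1) := by nlinarith
  have hv : 0 < ((5/7)*x)^α := Real.rpow_pos_of_pos hxpos α
  have hw : 1 - α*((5/7)*x - 1) ≤ ((5/7)*x)^(-α) := by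
    rw [Real.rpow_neg hxpos.le]
    rcases le_or_gt (1 - α*((5/7)*x - 1)) 0 with h | h
    · exact h.trans (inv_pos.mpr hv).le
    · rw [inv_eq_one_div, le_div_iff₀ hv]
      nlinarith [mul_le_mul_of_nonneg_left hb h.le, sq_nonneg (α*((5/7)*x - 1))]
  have hx_neg : x^(-α) = (7/5:ℝ)^(-α) * ((5/7)*x)^(-α) := by
    rw [← Real.mul_rpow (by norm_num) hxpos.le]
    congr 1; ring
  have main : (7/5:ℝ)^(-α) * ((1+(2/7)*α)*(s+1)^(-(3:ℝ)/2) + (1-(3/7)*α)*(s+1)^(-(5:ℝ)/2)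
        + (-(5/7)*α)*(s+1)^(-(7:ℝ)/2))
      = ((s+1)^(-(3:ℝ)/2) + (s+1)^(-(5:ℝ)/2)) * (7/5:ℝ)^(-α) * (1 - α*((5/7)*x - 1)) := by
    linear_combination ((7/5:ℝ)^(-α)*(5/7)*α) * k5
  rw [phi_decomp hα hs, main, ← hxdef]
  calc ((s+1)^(-(3:ℝ)/2) + (s+1)^(-(5:ℝ)/2)) * (7/5:ℝ)^(-α) * (1 - α*((5/7)*x - 1))
      ≤ ((s+1)^(-(3:ℝ)/2) + (s+1)^(-(5:ℝ)/2)) * (7/5:ℝ)^(-α) * ((5/7)*x)^(-α) := by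
        apply mul_le_mul_of_nonneg_left hw
        positivity
    _ = ((s+1)^(-(3:ℝ)/2) + (s+1)^(-(5:ℝ)/2)) * x^(-α) := by rw [hx_neg]; ring

theorem phi_lower_bound_one_three (γ : ℝ) (hγ : γ ∈ Set.Icc (1 : ℝ) 3) :
    (2 : ℝ) ^ ((1 - γ) / 2) * (γ / 2) *
      (∫ s in Set.Ioi (0 : ℝ), (s + 1) ^ (-(γ + 2) / 2) * (s + 2) ^ ((γ - 1) / 2))
      ≥ γ * (7 / 15) * (10 / 7) ^ ((5 - γ) / 2) := by
  obtain ⟨h1γ, h3γ⟩ := hγ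
  set α : ℝ := (3-γ)/2 with hα
  have hα0 : 0 ≤ α := by rw [hα]; linarith
  have hα1 : α ≤ 1 := by rw [hα]; linarith
  have hi1 : IntegrableOn (fun s:ℝ => (s+1)^(-(3:ℝ)/2)) (Set.Ioi 0) :=
    integrableOn_shift_rpow (by norm_num)
  have hi2 : IntegrableOn (fun s:ℝ => (s+1)^(-(5:ℝ)/2)) (Set.Ioi 0) :=
    integrableOn_shift_rpow (by norm_num)
  have hi3 : IntegrableOn (fun s:ℝ => (s+1)^(-(7:ℝ)/2)) (Set.Ioi 0) :=
    integrableOn_shift_rpow (by norm_num)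
  have hv1 : ∫ s in Set.Ioi (0:ℝ), (s+1)^(-(3:ℝ)/2) = 2 := by
    rw [integral_shift_rpow (by norm_num)]; norm_num
  have hv2 : ∫ s in Set.Ioi (0:ℝ), (s+1)^(-(5:ℝ)/2) = 2/3 := by
    rw [integral_shift_rpow (by norm_num)]; norm_num
  have hv3 : ∫ s in Set.Ioi (0:ℝ), (s+1)^(-(7:ℝ)/2) = 2/5 := by
    rw [integral_shift_rpow (by norm_num)]; norm_num
  have hB1 := hi1.const_mul ((7/5:ℝ)^(-α)*(1+(2/7)*α))
  have hB2 := hi2.const_mul ((7/5:ℝ)^(-α)*(1-(3/7)*α))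
  have hB3 := hi3.const_mul ((7/5:ℝ)^(-α)*(-(5/7)*α))
  have hcont : ContinuousOn (fun s:ℝ => (s+1)^(-(γ+2)/2) * (s+2)^((γ-1)/2)) (Set.Ioi 0) := by
    apply ContinuousOn.mul
    · exact ((continuous_id.add continuous_const).continuousOn).rpow_const
        (fun s hs => Or.inl (by have : (0:ℝ) < s := hs; simp only [Pi.add_apply, id_eq]; positivity))
    · exact ((continuous_id.add continuous_const).continuousOn).rpow_const
        (fun s hs => Or.inl (by have : (0:ℝ) < s := hs; simp only [Pi.add_apply, id_eq]; positivity))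
  have hf_int : IntegrableOn (fun s:ℝ => (s+1)^(-(γ+2)/2) * (s+2)^((γ-1)/2)) (Set.Ioi 0) := by
    apply Integrable.mono (hi1.add hi2) (hcont.aestronglyMeasurable measurableSet_Ioi)
    rw [ae_restrict_iff' measurableSet_Ioi]
    filter_upwards with s hs
    simp only [Pi.add_apply]
    have hs' : (0:ℝ) < s := hs
    have h1 : (0:ℝ) < s + 1 := by linarith
    have hx1 : (1:ℝ) ≤ (s+2)/(s+1) := by rw [le_div_iff₀ h1]; linarith
    rw [Real.norm_eq_abs, Real.norm_eq_abs, phi_decomp hα hs']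
    rw [abs_of_nonneg (by positivity), abs_of_nonneg (by positivity)]
    have hle1 : ((s+2)/(s+1))^(-α) ≤ 1 :=
      Real.rpow_le_one_of_one_le_of_nonpos hx1 (by linarith)
    nlinarith [Real.rpow_nonneg h1.le (-(3:ℝ)/2), Real.rpow_nonneg h1.le (-(5:ℝ)/2),
      Real.rpow_pos_of_pos (show (0:ℝ) < (s+2)/(s+1) by positivity) (-α)]
  have hIB : ∫ s in Set.Ioi (0:ℝ), ((7/5:ℝ)^(-α)*(1+(2/7)*α)*(s+1)^(-(3:ℝ)/2)
        + (7/5:ℝ)^(-α)*(1-(3/7)*α)*(s+1)^(-(5:ℝ)/2)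
        + (7/5:ℝ)^(-α)*(-(5/7)*α)*(s+1)^(-(7:ℝ)/2))
      = (8/3) * (7/5:ℝ)^(-α) := by
    have hB12 : Integrable (fun s:ℝ => (7/5:ℝ)^(-α)*(1+(2/7)*α)*(s+1)^(-(3:ℝ)/2)
        + (7/5:ℝ)^(-α)*(1-(3/7)*α)*(s+1)^(-(5:ℝ)/2)) (volume.restrict (Set.Ioi 0)) :=
      hB1.add hB2
    rw [integral_add hB12 hB3, integral_add hB1 hB2, integral_const_mul, integral_const_mul, integral_const_mul, hv1, hv2, hv3]
    ring
  have hI : (8/3) * (7/5:ℝ)^(-α)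
      ≤ ∫ s in Set.Ioi (0:ℝ), (s+1)^(-(γ+2)/2) * (s+2)^((γ-1)/2) := by
    rw [← hIB]
    apply setIntegral_mono_on ((hB1.add hB2).add hB3) hf_int measurableSet_Ioi
    intro s hs
    have h := phi_pointwise h1γ h3γ hα (show (0:ℝ) < s from hs)
    calc (7/5:ℝ)^(-α)*(1+(2/7)*α)*(s+1)^(-(3:ℝ)/2)
          + (7/5:ℝ)^(-α)*(1-(3/7)*α)*(s+1)^(-(5:ℝ)/2)
          + (7/5:ℝ)^(-α)*(-(5/7)*α)*(s+1)^(-(7:ℝ)/2)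
        = (7/5:ℝ)^(-α) * ((1+(2/7)*α)*(s+1)^(-(3:ℝ)/2) + (1-(3/7)*α)*(s+1)^(-(5:ℝ)/2)
            + (-(5/7)*α)*(s+1)^(-(7:ℝ)/2)) := by ring
      _ ≤ _ := h
  have hγpos : (0:ℝ) < γ := by linarith
  have id1 : (2:ℝ)^((1-γ)/2)*(γ/2)*((8/3)*(7/5:ℝ)^(-α)) = γ*(7/15)*(10/7:ℝ)^((5-γ)/2) := by
    have ea : (2:ℝ)^((1-γ)/2) = 2^α / 2 := by
      rw [show (1-γ)/2 = α - 1 by rw [hα]; ring, Real.rpow_sub two_pos, Real.rpow_one]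
    have eb : ((10:ℝ)/7)^((5-γ)/2) = (10/7) * (10/7:ℝ)^α := by
      rw [show (5-γ)/2 = 1 + α by rw [hα]; ring, Real.rpow_add (by norm_num), Real.rpow_one]
    have ec : ((7:ℝ)/5)^(-α) = (5/7:ℝ)^α := by
      rw [Real.rpow_neg (by norm_num), ← Real.inv_rpow (by norm_num : (0:ℝ) ≤ 7/5)]
      norm_num
    have ed : ((10:ℝ)/7)^α = 2^α * (5/7:ℝ)^α := by
      rw [← Real.mul_rpow (by norm_num) (by norm_num)]; norm_num
    rw [ea, eb, ec, ed]; ring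
  rw [ge_iff_le, ← id1]
  apply mul_le_mul_of_nonneg_left hI
  positivity
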